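/- With λ ∈ ℤⁿ₊, p = ⌊#λ/2⌋, and R_θ(λ) as in the construction: for every θ ∈ {0,1}^p the integer z(λ) − z(R_θ(λ)) is even and nonnegative, #λ − z(λ) is even and nonnegative, and Σ_{θ ∈ {0,1}^p} 2^{(z(λ) − z(R_θ(λ)))/2} = 2^{(#λ − z(λ))/2} · 3^{⌊z(λ)/2⌋}. -/

import Mathlib

/-- `cnt l m` is the number of indices `r` with `l r = m`. -/
def cnt {n : ℕ} (l : Fin n → ℤ) (m : ℤ) : ℕ :=
  (Finset.univ.filter fun r => l r = m).card

/-- The degree of atypicality `#λ = n − Σ_{m ≥ 1} |c_m(λ) − c_{−m}(λ)|`. -/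
def atyp {n : ℕ} (l : Fin n → ℤ) : ℕ :=
  n - ∑ m ∈ Finset.Icc 1 (Finset.univ.sup fun r => (l r).natAbs),
        ((cnt l (m : ℤ) : ℤ) - (cnt l (-(m : ℤ)) : ℤ)).natAbs

/-- `λ ∈ ℤⁿ₊`: weakly decreasing, and any repeated value is zero. -/
def ZPlus {n : ℕ} (l : Fin n → ℤ) : Prop :=
  Antitone l ∧ ∀ r s : Fin n, r < s → l r = l s → l r = 0

/-- `z(λ)`, the number of zero entries of `λ`. -/
def zcount {n : ℕ} (l : Fin n → ℤ) : ℕ :=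
  (Finset.univ.filter fun r => l r = 0).card

/-- `ν_θ = λ + Σ_q θ_q k_q (δ_{r_q} − δ_{s_q})`. -/
def nu {n p : ℕ} (l : Fin n → ℤ) (r s : Fin p → Fin n) (k : Fin p → ℕ)
    (θ : Fin p → Bool) : Fin n → ℤ := fun t =>
  l t + ∑ q : Fin p, (if θ q then (k q : ℤ) else 0) *
      ((if r q = t then 1 else 0) - (if s q = t then 1 else 0))

lemma cnt_le_one {n : ℕ} {l : Fin n → ℤ} (hl : ZPlus l) {m : ℤ} (hm : m ≠ 0) :
    cnt l m ≤ 1 := by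
  apply Finset.card_le_one.2
  intro a ha b hb
  simp only [Finset.mem_filter] at ha hb
  by_contra hab
  rcases lt_or_gt_of_ne hab with h | h
  · exact hm (ha.2 ▸ hl.2 a b h (ha.2.trans hb.2.symm))
  · exact hm (hb.2 ▸ hl.2 b a h (hb.2.trans ha.2.symm))

lemma atyp_eq {n : ℕ} {l : Fin n → ℤ} (hl : ZPlus l) :
    atyp l = zcount l + 2 * ((Finset.Icc 1 (Finset.univ.sup fun r => (l r).natAbs)).filter
      fun m : ℕ => 0 < cnt l (m : ℤ) ∧ 0 < cnt l (-(m : ℤ))).card := by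
  set M := Finset.univ.sup fun r => (l r).natAbs with hM
  -- n as a fiberwise sum
  have hmem : ∀ t : Fin n, t ∈ Finset.univ → (l t).natAbs ∈ Finset.Icc 0 M := by
    intro t _
    simp only [Finset.mem_Icc]
    exact ⟨Nat.zero_le _, Finset.le_sup (f := fun t => (l t).natAbs) (Finset.mem_univ t)⟩
  have hcard := Finset.card_eq_sum_card_fiberwise hmem
  have hsplit : Finset.Icc 0 M = insert 0 (Finset.Icc 1 M) := by
    ext m; simp [Finset.mem_Icc, Finset.mem_insert]; omega
  rw [hsplit, Finset.sum_insert (by simp)] at hcard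
  have h0 : (Finset.univ.filter fun t : Fin n => (l t).natAbs = 0).card = zcount l := by
    unfold zcount; congr 1; apply Finset.filter_congr; intro t _; simp [Int.natAbs_eq_zero]
  have hfib : ∀ m ∈ Finset.Icc 1 M,
      (Finset.univ.filter fun t : Fin n => (l t).natAbs = m).card
        = cnt l (m : ℤ) + cnt l (-(m : ℤ)) := by
    intro m hm
    simp only [Finset.mem_Icc] at hm
    have : (Finset.univ.filter fun t : Fin n => (l t).natAbs = m)
        = (Finset.univ.filter fun t => l t = (m : ℤ)) ∪
          (Finset.univ.filter fun t => l t = -(m : ℤ)) := by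
      ext t; simp [Int.natAbs_eq_iff]
    rw [this, Finset.card_union_of_disjoint]
    · rfl
    · simp only [Finset.disjoint_left, Finset.mem_filter, Finset.mem_univ, true_and]
      intro t h1 h2
      omega
  rw [Finset.sum_congr rfl hfib, h0, Finset.card_univ, Fintype.card_fin] at hcard
  -- pointwise natAbs formula
  have hpt : ∀ m ∈ Finset.Icc 1 M,
      ((cnt l (m : ℤ) : ℤ) - (cnt l (-(m : ℤ)) : ℤ)).natAbs
        = (cnt l (m : ℤ) + cnt l (-(m : ℤ))) - 2 * min (cnt l (m : ℤ)) (cnt l (-(m : ℤ))) := by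
    intro m hm; omega
  have hle : ∀ m ∈ Finset.Icc 1 M,
      2 * min (cnt l (m : ℤ)) (cnt l (-(m : ℤ))) ≤ cnt l (m : ℤ) + cnt l (-(m : ℤ)) := by
    intro m hm; omega
  have hsum : ∑ m ∈ Finset.Icc 1 M, ((cnt l (m : ℤ) : ℤ) - (cnt l (-(m : ℤ)) : ℤ)).natAbs
      = (∑ m ∈ Finset.Icc 1 M, (cnt l (m : ℤ) + cnt l (-(m : ℤ))))
        - ∑ m ∈ Finset.Icc 1 M, 2 * min (cnt l (m : ℤ)) (cnt l (-(m : ℤ))) := by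
    rw [← Finset.sum_tsub_distrib _ hle]
    exact Finset.sum_congr rfl hpt
  -- min sum equals card of A
  have hmin : ∀ m ∈ Finset.Icc 1 M,
      min (cnt l (m : ℤ)) (cnt l (-(m : ℤ)))
        = if 0 < cnt l (m : ℤ) ∧ 0 < cnt l (-(m : ℤ)) then 1 else 0 := by
    intro m hm
    simp only [Finset.mem_Icc] at hm
    have h1 : cnt l (m : ℤ) ≤ 1 := cnt_le_one hl (by exact_mod_cast Nat.one_le_iff_ne_zero.1 hm.1)
    have h2 : cnt l (-(m : ℤ)) ≤ 1 := cnt_le_one hl (by simp; omega)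
    split <;> omega
  have hminsum : ∑ m ∈ Finset.Icc 1 M, min (cnt l (m : ℤ)) (cnt l (-(m : ℤ)))
      = ((Finset.Icc 1 M).filter fun m : ℕ => 0 < cnt l (m : ℤ) ∧ 0 < cnt l (-(m : ℤ))).card := by
    rw [Finset.sum_congr rfl hmin, Finset.sum_ite, Finset.sum_const, Finset.sum_const]
    simp
  have h2A : ∑ m ∈ Finset.Icc 1 M, 2 * min (cnt l (m : ℤ)) (cnt l (-(m : ℤ)))
      = 2 * ((Finset.Icc 1 M).filter fun m : ℕ => 0 < cnt l (m : ℤ) ∧ 0 < cnt l (-(m : ℤ))).card := by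
    rw [← Finset.mul_sum, hminsum]
  rw [h2A] at hsum
  have hle2 : 2 * ((Finset.Icc 1 M).filter fun m : ℕ => 0 < cnt l (m : ℤ) ∧ 0 < cnt l (-(m : ℤ))).card
      ≤ ∑ m ∈ Finset.Icc 1 M, (cnt l (m : ℤ) + cnt l (-(m : ℤ))) := by
    rw [← h2A]; exact Finset.sum_le_sum hle
  unfold atyp
  rw [← hM, hsum]
  omega

/-- in the construction of the Main Theorem, `z(λ) − z(R_θ(λ))`
is even and nonnegative, `#λ − z(λ)` is even and nonnegative, and
`Σ_θ 2^{(z(λ)−z(R_θ(λ)))/2} = 2^{(#λ−z(λ))/2}·3^{⌊z(λ)/2⌋}`. -/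
theorem stmt3 (n p : ℕ) (l : Fin n → ℤ) (hl : ZPlus l)
    (hp : p = atyp l / 2)
    (r s : Fin p → Fin n) (hr : StrictMono r) (hs : StrictAnti s)
    (hrs : ∀ q, r q < s q) (hpair : ∀ q, l (r q) + l (s q) = 0)
    (I : ℕ → Set ℕ) (k : Fin p → ℕ)
    (hI0 : I 0 = {m : ℕ | ∃ t : Fin n, (l t).natAbs = m})
    (hstep : ∀ q : Fin p,
      (0 < l (r q) ∧
        IsLeast {m : ℕ | 0 < m ∧ (l (r q) + (m : ℤ)).toNat ∉ I q.val} (k q) ∧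
        I (q.val + 1) = insert (l (r q) + (k q : ℤ)).toNat (I q.val)) ∨
      (l (r q) = 0 ∧ ∃ k' : ℕ,
        ((Even (zcount l) ∧
            IsLeast {m : ℕ | 0 < m ∧ m ∉ I q.val} (k q) ∧
            IsLeast {m : ℕ | 0 < m ∧ m ∉ I q.val ∧ m ≠ k q} k') ∨
         (¬ Even (zcount l) ∧
            IsLeast {m : ℕ | 0 < m ∧ m ∉ I q.val} k' ∧
            IsLeast {m : ℕ | 0 < m ∧ m ∉ I q.val ∧ m ≠ k'} (k q))) ∧
        I (q.val + 1) = insert (k q) (insert k' (I q.val))))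
    (R : (Fin p → Bool) → Fin n → ℤ)
    (hR : ∀ θ, ZPlus (R θ) ∧
      ∃ π : Equiv.Perm (Fin n), ∀ t, R θ t = nu l r s k θ (π t)) :
    (∀ θ, zcount (R θ) ≤ zcount l ∧ Even (zcount l - zcount (R θ))) ∧
    (zcount l ≤ atyp l ∧ Even (atyp l - zcount l)) ∧
    ∑ θ : Fin p → Bool, 2 ^ ((zcount l - zcount (R θ)) / 2) =
      2 ^ ((atyp l - zcount l) / 2) * 3 ^ (zcount l / 2) := by
  obtain ⟨hmono, hrep⟩ := hl
  have hkpos : ∀ q, 0 < k q := by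
    intro q
    rcases hstep q with ⟨_, hle, _⟩ | ⟨_, k', hk', _⟩
    · exact hle.1.1
    · rcases hk' with ⟨_, hle, _⟩ | ⟨_, _, hle⟩
      · exact hle.1.1
      · exact hle.1.1
  have hls : ∀ q, l (s q) = - l (r q) := fun q => by linarith [hpair q]
  have hlr_nonneg : ∀ q, 0 ≤ l (r q) := by
    intro q
    have h := hmono (le_of_lt (hrs q))
    rw [hls q] at h; linarith
  have hrs' : ∀ q q', r q < s q' := by
    intro q q'
    rcases le_or_gt q q' with h | h
    · exact lt_of_le_of_lt (hr.monotone h) (hrs q')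
    · exact lt_trans (hrs q) (hs h)
  have hrsne : ∀ q q', r q ≠ s q' := fun q q' => ne_of_lt (hrs' q q')
  -- distinct positive values
  have hval : ∀ q q' : Fin p, l (r q) = l (r q') → 0 < l (r q) → q = q' := by
    intro q q' he hpos
    by_contra hne
    rcases lt_or_gt_of_ne hne with h | h
    · have := hrep (r q) (r q') (hr h) he
      omega
    · have := hrep (r q') (r q) (hr h) he.symm
      omega
  set M := Finset.univ.sup fun t => (l t).natAbs with hM
  set Aset := (Finset.Icc 1 M).filter
      (fun m : ℕ => 0 < cnt l (m : ℤ) ∧ 0 < cnt l (-(m : ℤ))) with hAset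
  have hatyp : atyp l = zcount l + 2 * Aset.card := atyp_eq ⟨hmono, hrep⟩
  set Qpos := (Finset.univ.filter fun q : Fin p => 0 < l (r q)) with hQpos
  set Zf := (Finset.univ.filter fun q : Fin p => l (r q) = 0) with hZf
  have hQZ : Qpos.card + Zf.card = p := by
    rw [hQpos, hZf]
    have : (Finset.univ.filter fun q : Fin p => l (r q) = 0)
        = (Finset.univ.filter fun q : Fin p => ¬ 0 < l (r q)) := by
      apply Finset.filter_congr; intro q _
      constructor
      · intro h; omega
      · intro h; have := hlr_nonneg q; omega
    rw [this, Finset.card_filter_add_card_filter_not, Finset.card_univ,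
      Fintype.card_fin]
  have ha_le : Qpos.card ≤ Aset.card := by
    apply Finset.card_le_card_of_injOn (fun q => (l (r q)).toNat)
    · intro q hq
      rw [hQpos, Finset.mem_coe, Finset.mem_filter] at hq
      have hpos := hq.2
      have htn : ((l (r q)).toNat : ℤ) = l (r q) := Int.toNat_of_nonneg (hlr_nonneg q)
      rw [hAset, Finset.mem_coe, Finset.mem_filter, Finset.mem_Icc]
      beta_reduce
      refine ⟨⟨by omega, ?_⟩, ?_, ?_⟩
      · have : (l (r q)).natAbs ≤ M := Finset.le_sup (f := fun t => (l t).natAbs)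
          (Finset.mem_univ (r q))
        omega
      · unfold cnt
        rw [Finset.card_pos]
        exact ⟨r q, by simp [htn]⟩
      · unfold cnt
        rw [Finset.card_pos]
        refine ⟨s q, ?_⟩
        simp only [Finset.mem_filter, Finset.mem_univ, true_and]
        rw [hls q, htn]
    · intro q hq q' hq' he
      rw [hQpos, Finset.coe_filter] at hq hq'
      simp only [Set.mem_setOf_eq] at hq hq'
      have h1 := hlr_nonneg q
      have h2 := hlr_nonneg q'
      have he' : (l (r q)).toNat = (l (r q')).toNat := he
      exact hval q q' (by omega) hq.2
  have hb_le : 2 * Zf.card ≤ zcount l := by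
    have hsub : (Zf.image r) ∪ (Zf.image s) ⊆ Finset.univ.filter fun t => l t = 0 := by
      intro t ht
      simp only [Finset.mem_union, Finset.mem_image, hZf, Finset.mem_filter,
        Finset.mem_univ, true_and] at ht ⊢
      rcases ht with ⟨q, hq, rfl⟩ | ⟨q, hq, rfl⟩
      · exact hq
      · rw [hls q, hq]; ring
    have hdisj : Disjoint (Zf.image r) (Zf.image s) := by
      simp only [Finset.disjoint_left, Finset.mem_image]
      rintro t ⟨q, _, rfl⟩ ⟨q', _, he⟩
      exact hrsne q q' he.symm
    have := Finset.card_le_card hsub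
    rw [Finset.card_union_of_disjoint hdisj,
      Finset.card_image_of_injective _ hr.injective,
      Finset.card_image_of_injective _ hs.injective] at this
    unfold zcount; omega
  have hbz : Zf.card = zcount l / 2 ∧ Qpos.card = Aset.card := by
    have hp2 : p = Aset.card + zcount l / 2 := by rw [hp, hatyp]; omega
    omega
  -- zcount of R θ
  have hzR : ∀ θ : Fin p → Bool,
      zcount (R θ) = zcount l - 2 * ((Zf.filter fun q => θ q = true).card) ∧
      2 * ((Zf.filter fun q => θ q = true).card) ≤ zcount l := by
    intro θ
    set c := (Zf.filter fun q => θ q = true).card with hc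
    have hcb : c ≤ Zf.card := Finset.card_le_card (Finset.filter_subset _ _)
    have hc_le : 2 * c ≤ zcount l := by omega
    refine ⟨?_, hc_le⟩
    -- value of nu
    have hnur : ∀ q₀ : Fin p, nu l r s k θ (r q₀) = l (r q₀) + (if θ q₀ then (k q₀ : ℤ) else 0) := by
      intro q₀
      unfold nu
      congr 1
      rw [Finset.sum_eq_single q₀]
      · simp [Ne.symm (hrsne q₀ q₀)]
      · intro q _ hq
        have h1 : r q ≠ r q₀ := fun h => hq (hr.injective h)
        have h2 : s q ≠ r q₀ := fun h => (hrsne q₀ q h.symm).elim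
        simp [h1, h2]
      · simp
    have hnus : ∀ q₀ : Fin p, nu l r s k θ (s q₀) = l (s q₀) - (if θ q₀ then (k q₀ : ℤ) else 0) := by
      intro q₀
      unfold nu
      rw [Finset.sum_eq_single q₀]
      · have h := hrsne q₀ q₀
        simp [h]; ring
      · intro q _ hq
        have h1 : r q ≠ s q₀ := hrsne q q₀
        have h2 : s q ≠ s q₀ := fun h => hq (hs.injective h)
        simp [h1, h2]
      · simp
    have hnuo : ∀ t : Fin n, (∀ q, r q ≠ t) → (∀ q, s q ≠ t) → nu l r s k θ t = l t := by
      intro t h1 h2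
      unfold nu
      rw [Finset.sum_eq_zero]
      · ring
      · intro q _; simp [h1 q, h2 q]
    -- the removed set
    set B := ((Zf.filter fun q => θ q = true).image r) ∪
             ((Zf.filter fun q => θ q = true).image s) with hB
    have hBcard : B.card = 2 * c := by
      rw [hB, Finset.card_union_of_disjoint, Finset.card_image_of_injective _ hr.injective,
        Finset.card_image_of_injective _ hs.injective, hc]
      · ring
      · simp only [Finset.disjoint_left, Finset.mem_image]
        rintro t ⟨q, _, rfl⟩ ⟨q', _, he⟩
        exact hrsne q q' he.symm
    have hBsub : B ⊆ Finset.univ.filter fun t => l t = 0 := by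
      intro t ht
      simp only [hB, Finset.mem_union, Finset.mem_image, Finset.mem_filter, hZf,
        Finset.mem_univ, true_and] at ht ⊢
      rcases ht with ⟨q, hq, rfl⟩ | ⟨q, hq, rfl⟩
      · exact hq.1
      · rw [hls q, hq.1]; ring
    have hkey : (Finset.univ.filter fun t => nu l r s k θ t = 0)
        = (Finset.univ.filter fun t => l t = 0) \ B := by
      ext t
      simp only [Finset.mem_filter, Finset.mem_sdiff, Finset.mem_univ, true_and]
      have hmemB : t ∈ B ↔ (∃ q, (l (r q) = 0 ∧ θ q = true) ∧ (r q = t ∨ s q = t)) := by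
        simp only [hB, Finset.mem_union, Finset.mem_image, Finset.mem_filter, hZf,
          Finset.mem_univ, true_and]
        constructor
        · rintro (⟨q, hq, rfl⟩ | ⟨q, hq, rfl⟩)
          · exact ⟨q, hq, Or.inl rfl⟩
          · exact ⟨q, hq, Or.inr rfl⟩
        · rintro ⟨q, hq, rfl | rfl⟩
          · exact Or.inl ⟨q, hq, rfl⟩
          · exact Or.inr ⟨q, hq, rfl⟩
      by_cases hEr : ∃ q₀, r q₀ = t
      · obtain ⟨q₀, rfl⟩ := hEr
        rw [hnur q₀]
        have hBiff : r q₀ ∈ B ↔ (l (r q₀) = 0 ∧ θ q₀ = true) := by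
          rw [hmemB]
          constructor
          · rintro ⟨q, hq, he | he⟩
            · rwa [hr.injective he] at hq
            · exact absurd he (hrsne q₀ q).symm
          · intro h; exact ⟨q₀, h, Or.inl rfl⟩
        rw [hBiff]
        rcases eq_or_lt_of_le (hlr_nonneg q₀) with h0 | h0
        · rw [← h0]
          have hk := hkpos q₀
          cases hθ : θ q₀ <;> simp [hθ] <;> omega
        · have : (0:ℤ) < l (r q₀) + (if θ q₀ then (k q₀ : ℤ) else 0) := by
            cases hθ : θ q₀ <;> simp [hθ] <;> push_cast <;> omega
          constructor
          · intro h; exact absurd h (by omega)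
          · intro h; exact absurd h.1 (by omega)
      · by_cases hEs : ∃ q₀, s q₀ = t
        · obtain ⟨q₀, rfl⟩ := hEs
          rw [hnus q₀, hls q₀]
          have hBiff : s q₀ ∈ B ↔ (l (r q₀) = 0 ∧ θ q₀ = true) := by
            rw [hmemB]
            constructor
            · rintro ⟨q, hq, he | he⟩
              · exact absurd he (hrsne q q₀)
              · rwa [hs.injective he] at hq
            · intro h; exact ⟨q₀, h, Or.inr rfl⟩
          rw [hBiff]
          rcases eq_or_lt_of_le (hlr_nonneg q₀) with h0 | h0
          · rw [← h0]
            have hk := hkpos q₀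
            cases hθ : θ q₀ <;> simp [hθ] <;> omega
          · have : -(l (r q₀)) - (if θ q₀ then (k q₀ : ℤ) else 0) < 0 := by
              cases hθ : θ q₀ <;> simp [hθ] <;> push_cast <;> omega
            constructor
            · intro h; exact absurd h (by omega)
            · intro h
              have h2 : l (r q₀) = 0 := by omega
              omega
        · push_neg at hEr hEs
          rw [hnuo t hEr hEs]
          rw [hmemB]
          constructor
          · intro h
            refine ⟨h, ?_⟩
            rintro ⟨q, _, rfl | rfl⟩
            · exact hEr q rfl
            · exact hEs q rfl
          · intro h; exact h.1
    -- zcount ν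
    have hznu : zcount (nu l r s k θ) = zcount l - 2 * c := by
      unfold zcount
      rw [hkey, Finset.card_sdiff_of_subset hBsub, hBcard]
    -- transfer via permutation
    obtain ⟨_, π, hπ⟩ := hR θ
    have : zcount (R θ) = zcount (nu l r s k θ) := by
      unfold zcount
      apply Finset.card_bij' (fun t _ => π t) (fun t _ => π.symm t)
      · intro t ht
        simp only [Finset.mem_filter, Finset.mem_univ, true_and] at ht ⊢
        rw [← hπ t]; exact ht
      · intro t ht
        simp only [Finset.mem_filter, Finset.mem_univ, true_and] at ht ⊢
        rw [hπ (π.symm t), Equiv.apply_symm_apply]; exact ht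
      · intro t _; simp
      · intro t _; simp
    rw [this, hznu]
  refine ⟨?_, ⟨by omega, ?_⟩, ?_⟩
  · intro θ
    obtain ⟨h1, h2⟩ := hzR θ
    constructor
    · omega
    · rw [h1]
      have : zcount l - (zcount l - 2 * (Zf.filter fun q => θ q = true).card)
          = 2 * (Zf.filter fun q => θ q = true).card := by omega
      rw [this]
      exact even_two_mul _
  · have : atyp l - zcount l = 2 * Aset.card := by omega
    rw [this]; exact even_two_mul _
  · -- the sum identity
    have hexp : ∀ θ : Fin p → Bool,
        (zcount l - zcount (R θ)) / 2 = (Zf.filter fun q => θ q = true).card := by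
      intro θ
      obtain ⟨h1, h2⟩ := hzR θ
      omega
    have hstep2 : ∀ θ : Fin p → Bool,
        (2:ℕ) ^ ((Zf.filter fun q => θ q = true).card)
          = ∏ q : Fin p, (if q ∈ Zf then (if θ q then 2 else 1) else 1) := by
      intro θ
      rw [Finset.prod_ite_mem, Finset.univ_inter, Finset.prod_ite, Finset.prod_const,
        Finset.prod_const, one_pow, mul_one]
    calc ∑ θ : Fin p → Bool, 2 ^ ((zcount l - zcount (R θ)) / 2)
        = ∑ θ : Fin p → Bool, ∏ q : Fin p, (if q ∈ Zf then (if θ q then 2 else 1) else 1) := by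
          refine Finset.sum_congr rfl fun θ _ => ?_
          rw [hexp θ, hstep2 θ]
      _ = ∏ q : Fin p, ∑ b : Bool, (if q ∈ Zf then (if b then 2 else 1) else 1) := by
          rw [Finset.prod_univ_sum]
          rw [Fintype.piFinset_univ]
      _ = ∏ q : Fin p, (if q ∈ Zf then 3 else 2) := by
          refine Finset.prod_congr rfl fun q _ => ?_
          by_cases h : q ∈ Zf <;> simp [h]
      _ = 3 ^ Zf.card * 2 ^ (p - Zf.card) := by
          rw [Finset.prod_ite, Finset.prod_const, Finset.prod_const]
          congr 1
          · congr 1; rw [Finset.filter_univ_mem]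
          · congr 1
            have := Finset.card_filter_add_card_filter_not
              (s := (Finset.univ : Finset (Fin p))) (p := fun q => q ∈ Zf)
            rw [Finset.filter_univ_mem] at this
            rw [Finset.card_univ, Fintype.card_fin] at this
            omega
      _ = 2 ^ ((atyp l - zcount l) / 2) * 3 ^ (zcount l / 2) := by
          have h1 : (atyp l - zcount l) / 2 = Aset.card := by omega
          have h2 : zcount l / 2 = Zf.card := hbz.1.symm
          have h3 : p - Zf.card = Aset.card := by omega
          rw [h1, h2, h3, mul_comm]
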